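/- arXiv:1708.05395 — 2 statements merged into one kernel-verified Lean document; each statement's English description precedes it below -/
import Mathlib

section
/- Let n >= 4, let r > 0, and let p : Fin n -> R^2 be a packing of n equal circles of radius r on the flat torus R^2/Lambda. Then no two circles share three or more tangencies: for all i ≠ j in Fin n, there do not exist three pairwise distinct lattice vectors lambda1, lambda2, lambda3 in Lambda such that ||p i - p j + lambda_t|| = 2r for t = 1, 2, 3. -/
noncomputable section

/-- The lattice generated by two vectors `v1`, `v2` in the Euclidean plane. -/
def GLat (v1 v2 : EuclideanSpace ℝ (Fin 2)) : Set (EuclideanSpace ℝ (Fin 2)) :=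
  {v | ∃ m n : ℤ, v = (m : ℝ) • v1 + (n : ℝ) • v2}

/-- `p` is a packing of `k` equal circles of radius `r` on the flat torus `ℝ²/Λ(v1,v2)`. -/
def IsPackingG (v1 v2 : EuclideanSpace ℝ (Fin 2)) {k : ℕ} (r : ℝ)
    (p : Fin k → EuclideanSpace ℝ (Fin 2)) : Prop :=
  ∀ i j : Fin k, ∀ l ∈ GLat v1 v2, (i ≠ j ∨ l ≠ 0) → 2 * r ≤ ‖p i - p j + l‖

open MeasureTheory Set Pointwise
open scoped ENNReal

/-- Schur's inequality (degree 1). -/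
lemma aux_schur (x y z : ℝ) (hx : 0 ≤ x) (hy : 0 ≤ y) (hz : 0 ≤ z) :
    0 ≤ x*(x-y)*(x-z) + y*(y-x)*(y-z) + z*(z-x)*(z-y) := by
  rcases le_total x y with h1 | h1 <;> rcases le_total y z with h2 | h2 <;>
    rcases le_total x z with h3 | h3 <;>
    nlinarith [mul_nonneg hx (sq_nonneg (x-y)), mul_nonneg hy (sq_nonneg (y-z)),
      mul_nonneg hz (sq_nonneg (z-x)), mul_nonneg hx (sq_nonneg (x-z)),
      mul_nonneg hy (sq_nonneg (x-y)), mul_nonneg hz (sq_nonneg (y-z)),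
      mul_nonneg (sub_nonneg.2 h1) (sq_nonneg (x-z)), mul_nonneg hx (sq_nonneg (y-z))]

/-- AM-GM for three nonnegative reals. -/
lemma aux_amgm3 (x y z : ℝ) (hx : 0 ≤ x) (hy : 0 ≤ y) (hz : 0 ≤ z) :
    27*(x*y*z) ≤ (x+y+z)^3 := by
  nlinarith [mul_nonneg hx (sq_nonneg (y-z)), mul_nonneg hy (sq_nonneg (x-z)),
    mul_nonneg hz (sq_nonneg (x-y)), mul_nonneg (add_nonneg (add_nonneg hx hy) hz)
      (add_nonneg (add_nonneg (sq_nonneg (x-y)) (sq_nonneg (y-z))) (sq_nonneg (x-z)))]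

/-- The maximal squared-side-product of a triangle with given circumradius. -/
lemma aux_ineq (t x y z : ℝ) (ht : 0 ≤ t) (hx : 0 ≤ x) (hy : 0 ≤ y) (hz : 0 ≤ z)
    (h : x*y*z = t*(2*(x*y+y*z+z*x) - x^2 - y^2 - z^2)) : x*y*z ≤ 27*t^3 := by
  rcases eq_or_lt_of_le (mul_nonneg (mul_nonneg hx hy) hz) with hq | hq
  · rw [← hq]; positivity
  · have hs := aux_schur x y z hx hy hz
    have hu : x + y + z ≤ 9*t := by nlinarith [mul_nonneg ht hs]
    have := aux_amgm3 x y z hx hy hz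
    nlinarith [pow_le_pow_left₀ (by positivity : (0:ℝ) ≤ x+y+z) hu 3]

/-- Coordinatewise squared norm in the Euclidean plane. -/
lemma aux_norm_sq (v : EuclideanSpace ℝ (Fin 2)) : ‖v‖^2 = v 0^2 + v 1^2 := by
  rw [EuclideanSpace.norm_eq, Real.sq_sqrt (by positivity)]
  simp [Fin.sum_univ_two, sq_abs]

/-- The key algebraic identity: for three points on a circle of radius `2r` centred at the
origin, the product of the squared side lengths equals `16r²` times the squared cross
product of two sides. -/
lemma aux_key (A0 A1 B0 B1 C0 C1 r : ℝ)
    (he1 : A0^2 + A1^2 = 4*r^2)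
    (he2 : (A0-B0)^2 + (A1-B1)^2 = 4*r^2)
    (he3 : (A0-C0)^2 + (A1-C1)^2 = 4*r^2) :
    (B0^2+B1^2) * (C0^2+C1^2) * ((B0-C0)^2+(B1-C1)^2)
      = 16*r^2*(B0*C1 - B1*C0)^2 := by
  linear_combination
    (4*((B0^2+B1^2)*(C0^2+C1^2) - (B0*C0+B1*C1)^2)
      - (2*(C0^2+C1^2)*((A0*B0+A1*B1)+(B0^2+B1^2)/2) - 4*(B0*C0+B1*C1)*(A0*C0+A1*C1))
      - ((B0^2+B1^2)*(2*(A0*C0+A1*C1)+(C0^2+C1^2)) - 2*(B0*C0+B1*C1)*(B0^2+B1^2))) * he1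
    + (2*(C0^2+C1^2)*((A0*B0+A1*B1)+(B0^2+B1^2)/2) - 4*(B0*C0+B1*C1)*(A0*C0+A1*C1)) * he2
    + ((B0^2+B1^2)*(2*(A0*C0+A1*C1)+(C0^2+C1^2)) - 2*(B0*C0+B1*C1)*(B0^2+B1^2)) * he3

/-- Linear independence from a nonzero determinant. -/
lemma aux_indep (μ1 μ2 : EuclideanSpace ℝ (Fin 2)) (hδ : μ1 0 * μ2 1 - μ2 0 * μ1 1 ≠ 0) :
    LinearIndependent ℝ ![μ1, μ2] := by
  rw [LinearIndependent.pair_iff]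
  intro s t hst
  have h0 : s * μ1 0 + t * μ2 0 = 0 := by simpa using congrArg (fun v => v 0) hst
  have h1 : s * μ1 1 + t * μ2 1 = 0 := by simpa using congrArg (fun v => v 1) hst
  have hs : s * (μ1 0 * μ2 1 - μ2 0 * μ1 1) = 0 := by linear_combination μ2 1 * h0 - μ2 0 * h1
  have ht : t * (μ1 0 * μ2 1 - μ2 0 * μ1 1) = 0 := by linear_combination μ1 0 * h1 - μ1 1 * h0
  exact ⟨by rcases mul_eq_zero.1 hs with h | h; exacts [h, absurd h hδ],
         by rcases mul_eq_zero.1 ht with h | h; exacts [h, absurd h hδ]⟩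

/-- The lattice is closed under integral combinations. -/
lemma aux_glat_comb {v1 v2 x y : EuclideanSpace ℝ (Fin 2)}
    (hx : x ∈ GLat v1 v2) (hy : y ∈ GLat v1 v2) (a b : ℤ) :
    a • x + b • y ∈ GLat v1 v2 := by
  obtain ⟨m1, n1, rfl⟩ := hx
  obtain ⟨m2, n2, rfl⟩ := hy
  refine ⟨a*m1 + b*m2, a*n1 + b*n2, ?_⟩
  push_cast
  rw [← Int.cast_smul_eq_zsmul ℝ a, ← Int.cast_smul_eq_zsmul ℝ b]
  module

lemma aux_glat_sub {v1 v2 x y : EuclideanSpace ℝ (Fin 2)}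
    (hx : x ∈ GLat v1 v2) (hy : y ∈ GLat v1 v2) : x - y ∈ GLat v1 v2 := by
  have := aux_glat_comb hx hy 1 (-1)
  simpa [sub_eq_add_neg] using this

set_option maxHeartbeats 8000000 in
theorem no_three_shared_tangencies (v1 v2 : EuclideanSpace ℝ (Fin 2))
    (hind : LinearIndependent ℝ ![v1, v2])
    (n : ℕ) (hn : 4 ≤ n) (r : ℝ) (hr : 0 < r)
    (p : Fin n → EuclideanSpace ℝ (Fin 2)) (hp : IsPackingG v1 v2 r p)
    (i j : Fin n) (hij : i ≠ j) :
    ¬ ∃ l1 l2 l3 : EuclideanSpace ℝ (Fin 2),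
      l1 ∈ GLat v1 v2 ∧ l2 ∈ GLat v1 v2 ∧ l3 ∈ GLat v1 v2 ∧
      l1 ≠ l2 ∧ l1 ≠ l3 ∧ l2 ≠ l3 ∧
      ‖p i - p j + l1‖ = 2 * r ∧ ‖p i - p j + l2‖ = 2 * r ∧
      ‖p i - p j + l3‖ = 2 * r := by
  rintro ⟨l1, l2, l3, hl1, hl2, hl3, h12, h13, h23, ht1, ht2, ht3⟩
  -- separation of lattice vectors
  have hsep : ∀ l ∈ GLat v1 v2, l ≠ 0 → 2 * r ≤ ‖l‖ := by
    intro l hl hne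
    have := hp i i l hl (Or.inr hne)
    simpa using this
  set y : EuclideanSpace ℝ (Fin 2) := p i - p j + l1 with hy
  set μ1 : EuclideanSpace ℝ (Fin 2) := l1 - l2 with hμ1
  set μ2 : EuclideanSpace ℝ (Fin 2) := l1 - l3 with hμ2
  have hyμ1 : y - μ1 = p i - p j + l2 := by rw [hy, hμ1]; abel
  have hyμ2 : y - μ2 = p i - p j + l3 := by rw [hy, hμ2]; abel
  -- coordinate equations
  have hsq : ∀ v : EuclideanSpace ℝ (Fin 2), ‖v‖ = 2*r → v 0^2 + v 1^2 = 4*r^2 := by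
    intro v hv
    have := aux_norm_sq v
    rw [hv] at this
    nlinarith [this]
  have he1 : y 0^2 + y 1^2 = 4*r^2 := hsq y ht1
  have he2 : (y 0 - μ1 0)^2 + (y 1 - μ1 1)^2 = 4*r^2 := by
    have h := hsq (y - μ1) (by rw [hyμ1]; exact ht2)
    simpa using h
  have he3 : (y 0 - μ2 0)^2 + (y 1 - μ2 1)^2 = 4*r^2 := by
    have h := hsq (y - μ2) (by rw [hyμ2]; exact ht3)
    simpa using h
  -- the key identity
  have key := aux_key (y 0) (y 1) (μ1 0) (μ1 1) (μ2 0) (μ2 1) r he1 he2 he3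
  -- lattice membership and separation of the three side vectors
  have hμ1lat : μ1 ∈ GLat v1 v2 := aux_glat_sub hl1 hl2
  have hμ2lat : μ2 ∈ GLat v1 v2 := aux_glat_sub hl1 hl3
  have hμ12lat : μ1 - μ2 ∈ GLat v1 v2 := aux_glat_sub hμ1lat hμ2lat
  have hμ1ne : μ1 ≠ 0 := sub_ne_zero.2 h12
  have hμ2ne : μ2 ≠ 0 := sub_ne_zero.2 h13
  have hμ12ne : μ1 - μ2 ≠ 0 := by
    rw [hμ1, hμ2]
    intro h
    exact h23 (by linear_combination (norm := module) -h)
  have hnormsq : ∀ v : EuclideanSpace ℝ (Fin 2), v ∈ GLat v1 v2 → v ≠ 0 →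
      4*r^2 ≤ v 0^2 + v 1^2 := by
    intro v hv hne
    have h1 := hsep v hv hne
    have h2 := aux_norm_sq v
    nlinarith [h1, h2, hr]
  have hX : 4*r^2 ≤ μ1 0^2 + μ1 1^2 := hnormsq μ1 hμ1lat hμ1ne
  have hY : 4*r^2 ≤ μ2 0^2 + μ2 1^2 := hnormsq μ2 hμ2lat hμ2ne
  have hZ : 4*r^2 ≤ (μ1 0 - μ2 0)^2 + (μ1 1 - μ2 1)^2 := by
    have := hnormsq (μ1 - μ2) hμ12lat hμ12ne
    simpa using this
  set δ : ℝ := μ1 0 * μ2 1 - μ1 1 * μ2 0 with hδdef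
  -- δ ≠ 0
  have hrr : (0:ℝ) < r^2 := by positivity
  have hXpos : 0 < μ1 0^2 + μ1 1^2 := lt_of_lt_of_le (by positivity) hX
  have hYpos : 0 < μ2 0^2 + μ2 1^2 := lt_of_lt_of_le (by positivity) hY
  have hZpos : 0 < (μ1 0 - μ2 0)^2 + (μ1 1 - μ2 1)^2 := lt_of_lt_of_le (by positivity) hZ
  have h16pos : 0 < 16*r^2*δ^2 := key ▸ mul_pos (mul_pos hXpos hYpos) hZpos
  have hδne : δ ≠ 0 := by
    intro h
    rw [h] at h16pos
    simp at h16pos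
  -- δ² ≤ 108 r⁴
  have hconstraint : (μ1 0^2 + μ1 1^2) * (μ2 0^2 + μ2 1^2) *
      ((μ1 0 - μ2 0)^2 + (μ1 1 - μ2 1)^2)
      = (4*r^2) * (2*((μ1 0^2 + μ1 1^2)*(μ2 0^2 + μ2 1^2)
          + (μ2 0^2 + μ2 1^2)*((μ1 0 - μ2 0)^2 + (μ1 1 - μ2 1)^2)
          + ((μ1 0 - μ2 0)^2 + (μ1 1 - μ2 1)^2)*(μ1 0^2 + μ1 1^2))
        - (μ1 0^2 + μ1 1^2)^2 - (μ2 0^2 + μ2 1^2)^2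
        - ((μ1 0 - μ2 0)^2 + (μ1 1 - μ2 1)^2)^2) := by
    linear_combination key
  have hbound := aux_ineq (4*r^2) _ _ _ (by positivity)
    (le_trans (by positivity) hX) (le_trans (by positivity) hY) (le_trans (by positivity) hZ)
    hconstraint
  rw [key] at hbound
  have hδ108 : δ^2 ≤ 108 * r^4 := by nlinarith [hbound, hrr, sq_nonneg δ, mul_pos hrr hrr]
  -- build the lattice basis
  have hind2 : LinearIndependent ℝ ![μ1, μ2] := aux_indep μ1 μ2 (by intro h; exact hδne (by linarith [h.symm, hδdef]))
  set b : Module.Basis (Fin 2) ℝ (EuclideanSpace ℝ (Fin 2)) :=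
    basisOfLinearIndependentOfCardEqFinrank hind2 (by simp) with hbdef
  have hb : ⇑b = ![μ1, μ2] := coe_basisOfLinearIndependentOfCardEqFinrank hind2 _
  set G := (Submodule.span ℤ (Set.range ⇑b)).toAddSubgroup with hGdef
  set F := ZSpan.fundamentalDomain b with hFdef
  have hFd : IsAddFundamentalDomain G F volume := ZSpan.isAddFundamentalDomain' b volume
  have hcnt : Countable G := (inferInstance : Countable (Submodule.span ℤ (Set.range ⇑b)))
  -- elements of G are lattice vectors
  have hGlat : ∀ g : G, (g : EuclideanSpace ℝ (Fin 2)) ∈ GLat v1 v2 := by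
    intro g
    have hg : (g : EuclideanSpace ℝ (Fin 2)) ∈ Submodule.span ℤ (Set.range ⇑b) := g.2
    rw [hb] at hg
    have hrange : Set.range ![μ1, μ2] = {μ1, μ2} := by
      ext x
      constructor
      · rintro ⟨k, rfl⟩
        fin_cases k <;> simp
      · rintro (rfl | rfl)
        exacts [⟨0, rfl⟩, ⟨1, rfl⟩]
    rw [hrange, Submodule.mem_span_pair] at hg
    obtain ⟨a, c, hac⟩ := hg
    rw [← hac]
    exact aux_glat_comb hμ1lat hμ2lat a c
  -- volume of the fundamental domain
  have hdet : ((EuclideanSpace.basisFun (Fin 2) ℝ).toBasis).det ⇑b = δ := by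
    rw [Module.Basis.det_apply, Matrix.det_fin_two, hb]
    simp [Module.Basis.toMatrix_apply]
    ring
  have hvolF0 : volume (ZSpan.fundamentalDomain
      ((EuclideanSpace.basisFun (Fin 2) ℝ).toBasis)) = 1 := by
    have he : ZSpan.fundamentalDomain ((EuclideanSpace.basisFun (Fin 2) ℝ).toBasis) =
        (MeasurableEquiv.toLp 2 (Fin 2 → ℝ)).symm ⁻¹' (Set.univ.pi fun _ => Set.Ico (0:ℝ) 1) := by
      ext x
      simp [ZSpan.fundamentalDomain, EuclideanSpace.basisFun, MeasurableEquiv.toLp]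
      exact Iff.rfl
    rw [he, (EuclideanSpace.volume_preserving_symm_measurableEquiv_toLp (Fin 2)).measure_preimage
      (MeasurableSet.univ_pi fun _ => measurableSet_Ico).nullMeasurableSet]
    rw [volume_pi_pi]
    simp
  have hvolF : volume F = ENNReal.ofReal (abs δ) := by
    rw [hFdef, ZSpan.measure_fundamentalDomain b volume
      ((EuclideanSpace.basisFun (Fin 2) ℝ).toBasis), hdet, hvolF0, mul_one]
  -- the balls
  set Bl : Fin n → Set (EuclideanSpace ℝ (Fin 2)) := fun k => Metric.ball (p k) r with hBl
  have hvol_ball : ∀ k, volume (Bl k) = ENNReal.ofReal r ^ 2 * ENNReal.ofReal Real.pi := by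
    intro k
    rw [hBl]
    rw [EuclideanSpace.volume_ball]
    norm_num
    rw [← ENNReal.ofReal_pow (Real.sqrt_nonneg _), Real.sq_sqrt Real.pi_nonneg]
  -- the pieces
  set S : Fin n × G → Set (EuclideanSpace ℝ (Fin 2)) :=
    fun kg => Metric.ball ((kg.2 : EuclideanSpace ℝ (Fin 2)) + p kg.1) r ∩ F with hS
  have hsum : ∀ k, volume (Bl k) = ∑' g : G, volume (S (k, g)) := by
    intro k
    have h2 := hFd.measure_eq_tsum (Bl k)
    rw [h2]
    refine tsum_congr fun g => ?_
    congr 1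
    rw [hS, hBl]
    congr 1
    have : (g +ᵥ Metric.ball (p k) r) =
        (g : EuclideanSpace ℝ (Fin 2)) +ᵥ Metric.ball (p k) r := rfl
    rw [this, Metric.vadd_ball, vadd_eq_add]
  -- disjointness
  have hsep2 : ∀ (k k' : Fin n) (g g' : G), (k, g) ≠ (k', g') →
      2 * r ≤ dist ((g : EuclideanSpace ℝ (Fin 2)) + p k)
        ((g' : EuclideanSpace ℝ (Fin 2)) + p k') := by
    intro k k' g g' hne
    have hlat : ((g : EuclideanSpace ℝ (Fin 2)) - g') ∈ GLat v1 v2 := by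
      have := hGlat (g - g')
      simpa using this
    rw [dist_eq_norm]
    have heq : (g : EuclideanSpace ℝ (Fin 2)) + p k - ((g' : EuclideanSpace ℝ (Fin 2)) + p k')
        = p k - p k' + ((g : EuclideanSpace ℝ (Fin 2)) - g') := by abel
    rw [heq]
    rcases eq_or_ne k k' with hkk | hkk
    · subst hkk
      have hgg : g ≠ g' := by
        intro h; exact hne (by rw [h])
      have hgg' : (g : EuclideanSpace ℝ (Fin 2)) - g' ≠ 0 := by
        rw [sub_ne_zero]
        exact fun h => hgg (Subtype.coe_injective h)
      exact hp k k _ hlat (Or.inr hgg')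
    · exact hp k k' _ hlat (Or.inl hkk)
  have hSdisj : Pairwise (Function.onFun Disjoint S) := by
    rintro ⟨k, g⟩ ⟨k', g'⟩ hne
    have hball : Disjoint (Metric.ball ((g : EuclideanSpace ℝ (Fin 2)) + p k) r)
        (Metric.ball ((g' : EuclideanSpace ℝ (Fin 2)) + p k') r) :=
      Metric.ball_disjoint_ball (by
        have := hsep2 k k' g g' hne
        linarith)
    exact Disjoint.mono Set.inter_subset_left Set.inter_subset_left hball
  have hSmeas : ∀ kg, MeasurableSet (S kg) := fun kg =>
    measurableSet_ball.inter (ZSpan.fundamentalDomain_measurableSet b)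
  -- the counting argument
  have hchain : (n : ℝ≥0∞) * (ENNReal.ofReal r ^ 2 * ENNReal.ofReal Real.pi)
      ≤ ENNReal.ofReal (abs δ) := by
    calc (n : ℝ≥0∞) * (ENNReal.ofReal r ^ 2 * ENNReal.ofReal Real.pi)
        = ∑ k : Fin n, volume (Bl k) := by
          simp [hvol_ball, Finset.sum_const, Finset.card_univ]
      _ = ∑ k : Fin n, ∑' g : G, volume (S (k, g)) := by
          exact Finset.sum_congr rfl fun k _ => hsum k
      _ = ∑' kg : Fin n × G, volume (S kg) :=
          ((tsum_fintype _).symm.trans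
            (ENNReal.tsum_prod (f := fun k g => volume (S (k, g)))).symm)
      _ = volume (⋃ kg, S kg) := (measure_iUnion hSdisj hSmeas).symm
      _ ≤ volume F := measure_mono (Set.iUnion_subset fun kg => Set.inter_subset_right)
      _ = ENNReal.ofReal (abs δ) := hvolF
  -- convert to a real inequality
  have hlhs : (n : ℝ≥0∞) * (ENNReal.ofReal r ^ 2 * ENNReal.ofReal Real.pi)
      = ENNReal.ofReal ((n : ℝ) * (r^2 * Real.pi)) := by
    rw [ENNReal.ofReal_mul (by positivity), ENNReal.ofReal_mul (by positivity)]
    rw [ENNReal.ofReal_pow hr.le, ENNReal.ofReal_natCast]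
  rw [hlhs] at hchain
  have hreal : (n : ℝ) * (r^2 * Real.pi) ≤ abs δ :=
    (ENNReal.ofReal_le_ofReal_iff (abs_nonneg δ)).1 hchain
  -- final contradiction
  have h4 : (4:ℝ) ≤ (n:ℝ) := by exact_mod_cast hn
  have hπ : (3.141592:ℝ) < Real.pi := Real.pi_gt_d6
  have habs : 4 * (r^2 * Real.pi) ≤ abs δ := by
    have hmono : ((4:ℝ) - (n:ℝ)) * (r^2 * Real.pi) ≤ 0 :=
      mul_nonpos_of_nonpos_of_nonneg (by linarith) (le_of_lt (mul_pos hrr Real.pi_pos))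
    nlinarith [hreal, hmono]
  have hsq2 : (4 * (r^2 * Real.pi))^2 ≤ δ^2 := by
    rw [← sq_abs δ]
    exact pow_le_pow_left₀ (by positivity) habs 2
  have hr4 : (0:ℝ) < r^4 := by positivity
  have hπ2 : (9.8:ℝ) < Real.pi^2 := by nlinarith [hπ, Real.pi_pos]
  have h16 : (0:ℝ) < 16*Real.pi^2 - 108 := by nlinarith [hπ2]
  nlinarith [hsq2, hδ108, mul_pos hr4 h16]
end
end

section
/- Let A, B, C, D be points in R^2 and d > 0 with ||A - B|| = ||B - C|| = ||C - D|| = d. Suppose the segments AB and CD are parallel, i.e., there exists a real number t with A - B = t * (C - D), and suppose A and D lie strictly on the same side of the line through B and C, i.e., the cross products cross(C - B, A - B) and cross(C - B, D - B) are both positive or both negative, where cross((a,b),(c,d')) = a*d' - b*c. Then ||A - D|| = d. -/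
noncomputable section

/-- The scalar cross product of two vectors in the Euclidean plane. -/
def cross (u w : EuclideanSpace ℝ (Fin 2)) : ℝ :=
  u 0 * w 1 - u 1 * w 0

theorem parallel_chain_forces_tangency (A B C D : EuclideanSpace ℝ (Fin 2)) (d : ℝ)
    (hd : 0 < d)
    (hAB : ‖A - B‖ = d) (hBC : ‖B - C‖ = d) (hCD : ‖C - D‖ = d)
    (hpar : ∃ t : ℝ, A - B = t • (C - D))
    (hside : (0 < cross (C - B) (A - B) ∧ 0 < cross (C - B) (D - B)) ∨
             (cross (C - B) (A - B) < 0 ∧ cross (C - B) (D - B) < 0)) :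
    ‖A - D‖ = d := by
  obtain ⟨t, ht⟩ := hpar
  have hnt : d = |t| * d := by
    have h := hAB
    rw [ht, norm_smul, Real.norm_eq_abs, hCD] at h
    linarith
  have habs : |t| = 1 := by
    have : (|t| - 1) * d = 0 := by linarith
    rcases mul_eq_zero.mp this with h | h
    · linarith
    · linarith
  rcases abs_eq (by norm_num : (0:ℝ) ≤ 1) |>.mp habs with h1 | h1
  · -- t = 1 : contradiction with hside
    rw [h1, one_smul] at ht
    have h0 : A 0 - B 0 = C 0 - D 0 := by
      have := congrArg (fun v => v 0) ht; simpa using this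
    have h1' : A 1 - B 1 = C 1 - D 1 := by
      have := congrArg (fun v => v 1) ht; simpa using this
    exfalso
    simp only [cross] at hside
    have e0 : (C - B) 0 = C 0 - B 0 := rfl
    have e1 : (C - B) 1 = C 1 - B 1 := rfl
    have f0 : (A - B) 0 = A 0 - B 0 := rfl
    have f1 : (A - B) 1 = A 1 - B 1 := rfl
    have g0 : (D - B) 0 = D 0 - B 0 := rfl
    have g1 : (D - B) 1 = D 1 - B 1 := rfl
    rw [e0, e1, f0, f1, g0, g1] at hside
    have key : (C 0 - B 0) * (D 1 - B 1) - (C 1 - B 1) * (D 0 - B 0) =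
        -((C 0 - B 0) * (A 1 - B 1) - (C 1 - B 1) * (A 0 - B 0)) := by
      linear_combination (C 0 - B 0) * h1' - (C 1 - B 1) * h0
    rcases hside with ⟨p, q⟩ | ⟨p, q⟩ <;> linarith
  · -- t = -1 : A - D = B - C
    rw [h1, neg_one_smul, neg_sub] at ht
    have hAD : A - D = B - C := by
      have : A - D = (A - B) - (D - C) + (B - C) := by abel
      rw [this, ht]; abel
    rw [hAD, ← hBC]
end
end
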